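/- (Example 4.6, setup.) Define f : ℝ³ → ℝ⁴ by f(x, y, z) = (x + y, sinh z, x − y, cosh z) and C : ℝ³ → ℝ⁴ by C(x, y, z) = (x, sinh z, x, cosh z). Then: J̃(∂f/∂x) = ∂f/∂x, J̃(∂f/∂y) = −∂f/∂y, C = J̃(∂f/∂z) + x • ∂f/∂x, and at every point of ℝ³ the four vectors ∂f/∂x, ∂f/∂y, ∂f/∂z, C are linearly independent. In particular f is an immersion and C is a J̃-tangent transversal vector field along f. -/

import Mathlib

noncomputable section

/-- The canonical para-complex structure on `ℝ⁴`: `J̃(a,b,c,d) = (c,d,a,b)`. -/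
def J4 (w : Fin 4 → ℝ) : Fin 4 → ℝ := ![w 2, w 3, w 0, w 1]

/-- The immersion of Example 4.6. -/
def fEx (x y z : ℝ) : Fin 4 → ℝ := ![x + y, Real.sinh z, x - y, Real.cosh z]

/-- The transversal field of Example 4.6. -/
def CEx (x y z : ℝ) : Fin 4 → ℝ := ![x, Real.sinh z, x, Real.cosh z]

/-- `∂f/∂x`. -/
def fExx (x y z : ℝ) : Fin 4 → ℝ := deriv (fun t => fEx t y z) x
/-- `∂f/∂y`. -/
def fExy (x y z : ℝ) : Fin 4 → ℝ := deriv (fun t => fEx x t z) y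
/-- `∂f/∂z`. -/
def fExz (x y z : ℝ) : Fin 4 → ℝ := deriv (fun t => fEx x y t) z

lemma fExx_eq (x y z : ℝ) : fExx x y z = ![1, 0, 1, 0] := by
  have h : HasDerivAt (fun t => fEx t y z) ![1, 0, 1, 0] x := by
    rw [hasDerivAt_pi]
    intro i
    fin_cases i <;> simp only [fEx, Matrix.cons_val_zero, Matrix.cons_val_one, Matrix.head_cons,
      Matrix.cons_val_two, Matrix.tail_cons, Matrix.cons_val_three]
    · exact (hasDerivAt_id x).add_const y
    · exact hasDerivAt_const x _
    · exact (hasDerivAt_id x).sub_const y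
    · exact hasDerivAt_const x _
  exact h.deriv

lemma fExy_eq (x y z : ℝ) : fExy x y z = ![1, 0, -1, 0] := by
  have h : HasDerivAt (fun t => fEx x t z) ![1, 0, -1, 0] y := by
    rw [hasDerivAt_pi]
    intro i
    fin_cases i <;> simp only [fEx, Matrix.cons_val_zero, Matrix.cons_val_one, Matrix.head_cons,
      Matrix.cons_val_two, Matrix.tail_cons, Matrix.cons_val_three]
    · exact (hasDerivAt_id y).const_add x
    · exact hasDerivAt_const y _
    · simpa using ((hasDerivAt_id y).const_sub x)
    · exact hasDerivAt_const y _
  exact h.deriv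

lemma fExz_eq (x y z : ℝ) : fExz x y z = ![0, Real.cosh z, 0, Real.sinh z] := by
  have h : HasDerivAt (fun t => fEx x y t) ![0, Real.cosh z, 0, Real.sinh z] z := by
    rw [hasDerivAt_pi]
    intro i
    fin_cases i <;> simp only [fEx, Matrix.cons_val_zero, Matrix.cons_val_one, Matrix.head_cons,
      Matrix.cons_val_two, Matrix.tail_cons, Matrix.cons_val_three]
    · exact hasDerivAt_const z _
    · exact Real.hasDerivAt_sinh z
    · exact hasDerivAt_const z _
    · exact Real.hasDerivAt_cosh z
  exact h.deriv

/-- Example 4.6, setup: `J̃(∂f/∂x) = ∂f/∂x`,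
`J̃(∂f/∂y) = −∂f/∂y`, `C = J̃(∂f/∂z) + x • ∂f/∂x`, and everywhere the four
vectors `∂f/∂x, ∂f/∂y, ∂f/∂z, C` are linearly independent; hence `f` is an
immersion and `C` is a `J̃`-tangent transversal vector field along `f`. -/
theorem stmt_8 :
    ∀ x y z : ℝ,
      J4 (fExx x y z) = fExx x y z ∧
      J4 (fExy x y z) = -(fExy x y z) ∧
      CEx x y z = J4 (fExz x y z) + x • fExx x y z ∧
      LinearIndependent ℝ ![fExx x y z, fExy x y z, fExz x y z, CEx x y z] := by
  intro x y z
  rw [fExx_eq, fExy_eq, fExz_eq]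
  refine ⟨by simp [J4], by
      funext i; fin_cases i <;> simp [J4], by
      funext i; fin_cases i <;> simp [J4, CEx], ?_⟩
  have : LinearIndependent ℝ
      (fun i => (Matrix.of ![![(1:ℝ), 0, 1, 0], ![1, 0, -1, 0],
        ![0, Real.cosh z, 0, Real.sinh z], ![x, Real.sinh z, x, Real.cosh z]]) i) := by
    refine Matrix.linearIndependent_rows_iff_isUnit.mpr ?_
    rw [Matrix.isUnit_iff_isUnit_det,
      isUnit_iff_ne_zero]
    have h := Real.cosh_sq_sub_sinh_sq z
    simp [Matrix.det_succ_row_zero, Fin.sum_univ_succ, Fin.succAbove]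
    nlinarith [h]
  exact this
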